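/- For the Cefalú quartic polynomial p_λ with λ = 3/2, every point of the form [±1:±1:0:0] (and its coordinate permutations) is a singular point of the hypersurface {p_{3/2} = 0} ⊂ ℙ³, and these give exactly 12 points of ℙ³. -/

import Mathlib

open scoped BigOperators

/-- The Cefalú family of quartic polynomials. -/
noncomputable def cefalu (lam : ℂ) (z : Fin 4 → ℂ) : ℂ :=
  (∑ i, z i ^ 4) - (lam / 3) * (∑ i, z i ^ 2) ^ 2

/-- Partial derivative of `cefalu lam` in the `i`-th coordinate. -/
noncomputable def cefaluPartial (lam : ℂ) (z : Fin 4 → ℂ) (i : Fin 4) : ℂ :=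
  deriv (fun t => cefalu lam (Function.update z i t)) (z i)

/-- Points of the form `[±1:±1:0:0]` and coordinate permutations thereof. -/
def twoSignPoints : Set (Fin 4 → ℂ) :=
  {z | ∃ i j : Fin 4, i ≠ j ∧ (z i = 1 ∨ z i = -1) ∧ (z j = 1 ∨ z j = -1) ∧
        ∀ k, k ≠ i → k ≠ j → z k = 0}

lemma deriv_key (a b c x : ℂ) :
    deriv (fun t : ℂ => (t ^ 4 + a) - c * (t ^ 2 + b) ^ 2) x
      = 4 * x ^ 3 - c * (2 * (x ^ 2 + b) * (2 * x)) := by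
  have h1 : HasDerivAt (fun t : ℂ => t ^ 4 + a) (4 * x ^ 3) x := by
    simpa using (hasDerivAt_pow 4 x).add_const a
  have h2 : HasDerivAt (fun t : ℂ => t ^ 2 + b) (2 * x) x := by
    simpa using (hasDerivAt_pow 2 x).add_const b
  have h3 : HasDerivAt (fun t : ℂ => c * (t ^ 2 + b) ^ 2)
      (c * (2 * (x ^ 2 + b) ^ 1 * (2 * x))) x := (h2.pow 2).const_mul c
  have := (h1.sub h3).deriv
  rw [show (fun t : ℂ => (t ^ 4 + a) - c * (t ^ 2 + b) ^ 2) = ((fun t : ℂ => t ^ 4 + a) - fun t => c * (t ^ 2 + b) ^ 2) from rfl, this]; ring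

lemma sum_update_pow (z : Fin 4 → ℂ) (k : Fin 4) (t : ℂ) (n : ℕ) :
    ∑ i, Function.update z k t i ^ n = t ^ n + ((∑ i, z i ^ n) - z k ^ n) := by
  have h : ∀ i, Function.update z k t i ^ n
      = Function.update (fun i => z i ^ n) k (t ^ n) i := fun i =>
    (Function.apply_update (fun _ x => x ^ n) z k t i)
  rw [Finset.sum_congr rfl (fun i _ => h i),
    Finset.sum_update_of_mem (Finset.mem_univ k),
    Finset.sum_sdiff_eq_sub (Finset.singleton_subset_iff.mpr (Finset.mem_univ k)),
    Finset.sum_singleton]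

lemma cefaluPartial_eq (lam : ℂ) (z : Fin 4 → ℂ) (k : Fin 4) :
    cefaluPartial lam z k
      = 4 * z k ^ 3 - lam / 3 * (2 * (∑ i, z i ^ 2) * (2 * z k)) := by
  unfold cefaluPartial
  have h : (fun t => cefalu lam (Function.update z k t))
      = fun t : ℂ => (t ^ 4 + ((∑ i, z i ^ 4) - z k ^ 4))
          - (lam / 3) * (t ^ 2 + ((∑ i, z i ^ 2) - z k ^ 2)) ^ 2 := by
    funext t
    rw [cefalu, sum_update_pow, sum_update_pow]
  rw [h, deriv_key]
  ring

lemma twoSign_vals {z : Fin 4 → ℂ} (hz : z ∈ twoSignPoints) :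
    (∀ k, z k ^ 2 = 1 ∨ z k = 0) ∧ (∑ i, z i ^ 2) = 2 := by
  obtain ⟨i, j, hij, hi, hj, h0⟩ := hz
  have hi2 : z i ^ 2 = 1 := by rcases hi with h | h <;> rw [h] <;> ring
  have hj2 : z j ^ 2 = 1 := by rcases hj with h | h <;> rw [h] <;> ring
  have hvals : ∀ k, z k ^ 2 = 1 ∨ z k = 0 := by
    intro k
    by_cases hki : k = i
    · subst hki; exact Or.inl hi2
    by_cases hkj : k = j
    · subst hkj; exact Or.inl hj2
    · exact Or.inr (h0 k hki hkj)
  refine ⟨hvals, ?_⟩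
  have hsub : ({i, j} : Finset (Fin 4)) ⊆ Finset.univ := Finset.subset_univ _
  have hzero : ∀ x ∈ Finset.univ, x ∉ ({i, j} : Finset (Fin 4)) → z x ^ 2 = 0 := by
    intro x _ hx
    simp only [Finset.mem_insert, Finset.mem_singleton, not_or] at hx
    rw [h0 x hx.1 hx.2]; ring
  rw [← Finset.sum_subset hsub hzero, Finset.sum_pair hij, hi2, hj2]
  norm_num

theorem part1 : ∀ z ∈ twoSignPoints,
    cefalu (3 / 2) z = 0 ∧ ∀ k, cefaluPartial (3 / 2) z k = 0 := by
  intro z hz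
  obtain ⟨hvals, hS2⟩ := twoSign_vals hz
  have hcube : ∀ k, z k ^ 3 = z k := by
    intro k
    rcases hvals k with h | h
    · calc z k ^ 3 = z k ^ 2 * z k := by ring
        _ = z k := by rw [h, one_mul]
    · rw [h]; ring
  have hS4 : (∑ i, z i ^ 4) = 2 := by
    have h4 : ∀ k, z k ^ 4 = z k ^ 2 := by
      intro k
      rcases hvals k with h | h
      · calc z k ^ 4 = z k ^ 2 * z k ^ 2 := by ring
          _ = z k ^ 2 := by rw [h, one_mul]
      · rw [h]; ring
    calc (∑ i, z i ^ 4) = ∑ i, z i ^ 2 := Finset.sum_congr rfl fun k _ => h4 k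
      _ = 2 := hS2
  constructor
  · rw [cefalu, hS2, hS4]; norm_num
  · intro k
    rw [cefaluPartial_eq, hS2, hcube k]; ring

/-- Index type for the 12 points. -/
abbrev SIdx := {p : Fin 4 × Fin 4 // p.1 < p.2} × Bool

noncomputable def svec (a : SIdx) : Fin 4 → ℂ := fun k =>
  if k = a.1.1.1 then 1 else if k = a.1.1.2 then (if a.2 then 1 else -1) else 0

lemma svec_fst (a : SIdx) : svec a a.1.1.1 = 1 := by simp [svec]

lemma svec_snd (a : SIdx) : svec a a.1.1.2 = if a.2 then 1 else -1 := by
  have h : a.1.1.2 ≠ a.1.1.1 := (a.1.2).ne'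
  simp [svec, h]

lemma svec_other (a : SIdx) (k : Fin 4) (h1 : k ≠ a.1.1.1) (h2 : k ≠ a.1.1.2) :
    svec a k = 0 := by simp [svec, h1, h2]

lemma svec_ne_zero (a : SIdx) : svec a ≠ 0 := by
  intro h
  have := congrFun h a.1.1.1
  rw [svec_fst] at this
  exact one_ne_zero this

lemma svec_mem (a : SIdx) : svec a ∈ twoSignPoints := by
  refine ⟨a.1.1.1, a.1.1.2, (a.1.2).ne, ?_, ?_, fun k h1 h2 => svec_other a k h1 h2⟩
  · rw [svec_fst]; left; rfl
  · rw [svec_snd]; cases a.2 <;> simp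

noncomputable def F (a : SIdx) : Projectivization ℂ (Fin 4 → ℂ) :=
  Projectivization.mk ℂ (svec a) (svec_ne_zero a)

lemma mem_range_aux {z : Fin 4 → ℂ} (hz : z ≠ 0) (i j : Fin 4) (hij : i < j)
    (hi : z i = 1 ∨ z i = -1) (hj : z j = 1 ∨ z j = -1)
    (h0 : ∀ k, k ≠ i → k ≠ j → z k = 0) :
    Projectivization.mk ℂ z hz ∈ Set.range F := by
  have key : ∀ (b : Bool) (c : ℂ), c * c = 1 → z i = c →
      z j = c * (if b then 1 else -1) →
      Projectivization.mk ℂ z hz ∈ Set.range F := by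
    intro b c hc2 hci hcj
    refine ⟨(⟨(i, j), hij⟩, b), ?_⟩
    rw [F, Projectivization.mk_eq_mk_iff']
    refine ⟨c, funext fun k => ?_⟩
    simp only [Pi.smul_apply, smul_eq_mul]
    by_cases hki : k = i
    · subst hki
      rw [hci, hc2, svec_fst (⟨⟨(k, j), hij⟩, b⟩ : SIdx)]
    by_cases hkj : k = j
    · subst hkj
      rw [hcj, svec_snd (⟨⟨(i, k), hij⟩, b⟩ : SIdx), ← mul_assoc, hc2, one_mul]
    · rw [h0 k hki hkj,
        svec_other (⟨⟨(i, j), hij⟩, b⟩ : SIdx) k hki hkj, mul_zero]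
  rcases hi with hi | hi <;> rcases hj with hj | hj
  · exact key true 1 (by norm_num) hi (by rw [hj]; norm_num)
  · exact key false 1 (by norm_num) hi (by rw [hj]; norm_num)
  · exact key false (-1) (by norm_num) hi (by rw [hj]; norm_num)
  · exact key true (-1) (by norm_num) hi (by rw [hj]; norm_num)

lemma F_inj : Function.Injective F := by
  rintro ⟨⟨⟨i₁, j₁⟩, hij₁⟩, s₁⟩ ⟨⟨⟨i₂, j₂⟩, hij₂⟩, s₂⟩ h
  set a₁ : SIdx := ⟨⟨(i₁, j₁), hij₁⟩, s₁⟩ with ha₁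
  set a₂ : SIdx := ⟨⟨(i₂, j₂), hij₂⟩, s₂⟩ with ha₂
  rw [F, F, Projectivization.mk_eq_mk_iff] at h
  obtain ⟨u, hu⟩ := h
  have h1 : ∀ k, (u : ℂ) * svec a₂ k = svec a₁ k := by
    intro k
    have := congrFun hu k
    simpa [Units.smul_def] using this
  have hmem1 : ∀ k, svec a₁ k ≠ 0 → (k = i₁ ∨ k = j₁) := by
    intro k hk
    by_contra hcon
    push_neg at hcon
    exact hk (svec_other a₁ k hcon.1 hcon.2)
  have hmem2 : ∀ k, svec a₂ k ≠ 0 → (k = i₂ ∨ k = j₂) := by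
    intro k hk
    by_contra hcon
    push_neg at hcon
    exact hk (svec_other a₂ k hcon.1 hcon.2)
  have hi₂ : i₂ = i₁ ∨ i₂ = j₁ := by
    apply hmem1
    rw [← h1 i₂, svec_fst a₂, mul_one]
    exact u.ne_zero
  have hj₂ : j₂ = i₁ ∨ j₂ = j₁ := by
    apply hmem1
    rw [← h1 j₂, svec_snd a₂]
    cases s₂ <;> simp [u.ne_zero, ha₂]
  have hi₁ : i₁ = i₂ ∨ i₁ = j₂ := by
    apply hmem2
    intro hzero
    have := h1 i₁
    rw [hzero, mul_zero, svec_fst a₁] at this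
    exact one_ne_zero this.symm
  have hii : i₂ = i₁ := by
    rcases hi₂ with h' | h'
    · exact h'
    · exfalso
      rcases hi₁ with h'' | h''
      · rw [h''] at hij₁; rw [h'] at hij₁; exact lt_irrefl _ hij₁
      · rw [h''] at hij₁
        rw [h'] at hij₂
        exact lt_irrefl _ (hij₁.trans hij₂)
  have hjj : j₂ = j₁ := by
    rcases hj₂ with h' | h'
    · exfalso
      rw [← hii] at h'
      rw [h'] at hij₂
      exact lt_irrefl _ hij₂
    · exact h'
  subst hii hjj
  have hu1 : (u : ℂ) = 1 := by
    have := h1 i₂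
    rwa [svec_fst a₂, mul_one, show svec a₁ i₂ = 1 from svec_fst a₁] at this
  have hs : s₁ = s₂ := by
    have := h1 j₂
    rw [hu1, one_mul, svec_snd a₂, show svec a₁ j₂ = if s₁ then 1 else -1 from svec_snd a₁] at this
    cases s₁ <;> cases s₂ <;> simp_all
    · norm_num at this
    · norm_num at this
  subst hs
  rfl

theorem cefalu_singularities_three_halves :
    (∀ z ∈ twoSignPoints,
        cefalu (3 / 2) z = 0 ∧ ∀ k, cefaluPartial (3 / 2) z k = 0) ∧
      Set.ncard {x : Projectivization ℂ (Fin 4 → ℂ) |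
        ∃ z : Fin 4 → ℂ, ∃ hz : z ≠ 0, z ∈ twoSignPoints ∧
          x = Projectivization.mk ℂ z hz} = 12 := by
  refine ⟨part1, ?_⟩
  have hset : {x : Projectivization ℂ (Fin 4 → ℂ) |
      ∃ z : Fin 4 → ℂ, ∃ hz : z ≠ 0, z ∈ twoSignPoints ∧
        x = Projectivization.mk ℂ z hz} = Set.range F := by
    ext x
    constructor
    · rintro ⟨z, hz, ⟨i, j, hij, hi, hj, h0⟩, rfl⟩
      rcases lt_or_gt_of_ne hij with h | h
      · exact mem_range_aux hz i j h hi hj h0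
      · exact mem_range_aux hz j i h hj hi (fun k h1 h2 => h0 k h2 h1)
    · rintro ⟨a, rfl⟩
      exact ⟨svec a, svec_ne_zero a, svec_mem a, rfl⟩
  rw [hset, ← Set.image_univ, Set.ncard_image_of_injective _ F_inj,
    Set.ncard_univ, Nat.card_eq_fintype_card]
  decide
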